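/- Let Z₀, Z₁, …, Z_n be a martingale with |Z_i − Z_{i−1}| ≤ c_i almost surely for constants c_i > 0 and with conditional variances E[(Z_i − Z_{i−1})² | F_{i−1}] ≤ σ_i². Then for all t ≥ 0, P(Z_n − Z₀ ≥ t) ≤ exp( −t² / (2 Σ_{i=1}^n σ_i² + 2Mt/3) ), where M = max_i c_i. -/

import Mathlib

open MeasureTheory Real Finset

set_option maxHeartbeats 1000000

lemma fact_ge : ∀ n : ℕ, 2 * 3 ^ n ≤ (n + 2).factorial := by
  intro n
  induction n with
  | zero => simp [Nat.factorial]
  | succ k ih =>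
    have : (k + 3).factorial = (k + 3) * (k + 2).factorial := rfl
    calc 2 * 3 ^ (k + 1) = 3 * (2 * 3 ^ k) := by ring
    _ ≤ 3 * (k + 2).factorial := by omega
    _ ≤ (k + 3) * (k + 2).factorial := by
        have := (k+2).factorial_pos; nlinarith
    _ = (k + 3).factorial := rfl

lemma exp_sub_bound {u : ℝ} (h0 : 0 ≤ u) (h3 : u < 3) :
    Real.exp u - 1 - u ≤ u ^ 2 / (2 * (1 - u / 3)) := by
  have hsum : Summable (fun n : ℕ => u ^ n / n.factorial) :=
    Real.summable_pow_div_factorial u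
  have hexp : Real.exp u = ∑' n : ℕ, u ^ n / n.factorial := by
    rw [Real.exp_eq_exp_ℝ, NormedSpace.exp_eq_tsum_div]
  have hsum1 : Summable (fun n : ℕ => u ^ (n + 1) / (n + 1).factorial) :=
    (summable_nat_add_iff 1).mpr hsum
  have hsum2 : Summable (fun n : ℕ => u ^ (n + 2) / (n + 2).factorial) :=
    (summable_nat_add_iff 2).mpr hsum
  have hsplit : Real.exp u = 1 + u + ∑' n : ℕ, u ^ (n + 2) / (n + 2).factorial := by
    rw [hexp, Summable.tsum_eq_zero_add hsum, Summable.tsum_eq_zero_add hsum1]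
    simp [Nat.factorial]
    ring
  have hgeom : Summable (fun n : ℕ => u ^ 2 / 2 * (u / 3) ^ n) :=
    (summable_geometric_of_lt_one (by positivity) (by linarith)).mul_left _
  have hle : ∑' n : ℕ, u ^ (n + 2) / (n + 2).factorial ≤
      ∑' n : ℕ, u ^ 2 / 2 * (u / 3) ^ n := by
    refine Summable.tsum_le_tsum (fun n => ?_) hsum2 hgeom
    have hf := fact_ge n
    have hfpos : (0:ℝ) < ((n + 2).factorial : ℝ) := by positivity
    have h2 : (2 * 3 ^ n : ℝ) ≤ ((n + 2).factorial : ℝ) := by exact_mod_cast hf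
    rw [div_le_iff₀ hfpos]
    have : u ^ (n + 2) = u ^ 2 * u ^ n := by ring
    rw [this]
    have hun : u ^ n * (2 * 3 ^ n) ≤ u ^ n * ((n+2).factorial : ℝ) := by
      apply mul_le_mul_of_nonneg_left h2 (by positivity)
    calc u ^ 2 * u ^ n = u ^ 2 / 2 * (u ^ n / 3 ^ n) * (2 * 3 ^ n) := by
          field_simp
    _ ≤ u ^ 2 / 2 * (u / 3) ^ n * ((n+2).factorial : ℝ) := by
          rw [div_pow]
          have h1 : (0:ℝ) ≤ u ^ 2 / 2 * (u ^ n / 3 ^ n) := by positivity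
          apply mul_le_mul_of_nonneg_left h2 h1
  have hgs : ∑' n : ℕ, u ^ 2 / 2 * (u / 3) ^ n = u ^ 2 / 2 * (1 - u / 3)⁻¹ := by
    rw [tsum_mul_left, tsum_geometric_of_lt_one (by positivity) (by linarith)]
  have : Real.exp u - 1 - u ≤ u ^ 2 / 2 * (1 - u / 3)⁻¹ := by
    rw [hsplit]; linarith [hle.trans_eq hgs]
  calc Real.exp u - 1 - u ≤ u ^ 2 / 2 * (1 - u / 3)⁻¹ := this
  _ = u ^ 2 / (2 * (1 - u / 3)) := by
      have h13 : (0:ℝ) < 1 - u / 3 := by linarith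
      field_simp

lemma exp_le_quad_neg {x : ℝ} (hx : x ≤ 0) : Real.exp x ≤ 1 + x + x ^ 2 / 2 := by
  have hd : ∀ y : ℝ, HasDerivAt (fun z => 1 + z + z ^ 2 / 2 - Real.exp z)
      (1 + y - Real.exp y) y := by
    intro y
    have h1 : HasDerivAt (fun z : ℝ => 1 + z + z ^ 2 / 2) (1 + y) y := by
      have := ((hasDerivAt_id y).const_add (1:ℝ)).add ((hasDerivAt_pow 2 y).div_const 2)
      exact this.congr_deriv (by push_cast; ring)
    exact h1.sub (Real.hasDerivAt_exp y)
  have hanti : Antitone (fun z : ℝ => 1 + z + z ^ 2 / 2 - Real.exp z) := by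
    apply antitone_of_deriv_nonpos (fun y => (hd y).differentiableAt)
    intro y
    rw [(hd y).deriv]
    linarith [Real.add_one_le_exp y]
  have := hanti hx
  simp only [Real.exp_zero] at this
  nlinarith [this]

lemma exp_le_quad {x A : ℝ} (hx : |x| ≤ A) (hA : A < 3) :
    Real.exp x ≤ 1 + x + x ^ 2 / (2 * (1 - A / 3)) := by
  have hA0 : 0 ≤ A := le_trans (abs_nonneg x) hx
  have hden : (0:ℝ) < 1 - A / 3 := by linarith
  rcases le_or_gt x 0 with h | h
  · have := exp_le_quad_neg h
    have h2 : x ^ 2 / 2 ≤ x ^ 2 / (2 * (1 - A / 3)) := by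
      apply div_le_div_of_nonneg_left (by positivity) (by positivity)
      nlinarith
    linarith
  · have hxA : x ≤ A := le_trans (le_abs_self x) hx
    have h1 := exp_sub_bound h.le (lt_of_le_of_lt hxA hA)
    have h2 : x ^ 2 / (2 * (1 - x / 3)) ≤ x ^ 2 / (2 * (1 - A / 3)) := by
      apply div_le_div_of_nonneg_left (by positivity) (by positivity)
      nlinarith
    linarith

open MeasureTheory

lemma integrable_of_ae_bound' {Ω : Type*} {m0 : MeasurableSpace Ω} {μ : Measure Ω}
    [IsFiniteMeasure μ] {f : Ω → ℝ} (hm : AEStronglyMeasurable f μ) {C : ℝ}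
    (h : ∀ᵐ ω ∂μ, |f ω| ≤ C) : Integrable f μ :=
  ⟨hm, HasFiniteIntegral.of_bounded (C := C) (by simpa [Real.norm_eq_abs] using h)⟩

lemma condexp_exp_le {Ω : Type*} {m0 : MeasurableSpace Ω} {μ : Measure Ω}
    [IsProbabilityMeasure μ] {m : MeasurableSpace Ω} (hm : m ≤ m0) {X : Ω → ℝ}
    (hXm : AEStronglyMeasurable[m0] X μ) {c s A L : ℝ} (hL : 0 ≤ L) (hA : L * c ≤ A)
    (hA3 : A < 3)
    (hbdd : ∀ᵐ ω ∂μ, |X ω| ≤ c)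
    (hmean : μ[X|m] =ᵐ[μ] 0)
    (hvar : ∀ᵐ ω ∂μ, (μ[fun ω' => X ω' ^ 2|m]) ω ≤ s) :
    μ[fun ω => Real.exp (L * X ω)|m] ≤ᵐ[μ] fun _ => Real.exp (L ^ 2 / (2 * (1 - A / 3)) * s) := by
  have hc0 : 0 ≤ c := by
    by_contra hcon
    push_neg at hcon
    have : ∀ᵐ ω ∂μ, False := by
      filter_upwards [hbdd] with ω hω
      exact absurd (le_trans (abs_nonneg _) hω) (not_le.mpr hcon)
    rw [ae_iff] at this
    simp only [not_false_eq_true, Set.setOf_true] at this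
    exact (IsProbabilityMeasure.ne_zero μ) (by simpa using this)
  have hA0 : 0 ≤ A := le_trans (by positivity) hA
  have hden : (0:ℝ) < 1 - A / 3 := by linarith
  set K : ℝ := L ^ 2 / (2 * (1 - A / 3)) with hK
  have hK0 : 0 ≤ K := by positivity
  -- integrability facts
  have hX_int : Integrable X μ := integrable_of_ae_bound' hXm hbdd
  have hX2_int : Integrable (fun ω => X ω ^ 2) μ := by
    refine integrable_of_ae_bound' (hXm.pow 2) (C := c ^ 2) ?_
    filter_upwards [hbdd] with ω hω
    rw [abs_pow]
    exact pow_le_pow_left₀ (abs_nonneg _) hω 2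
  have hexp_int : Integrable (fun ω => Real.exp (L * X ω)) μ := by
    refine integrable_of_ae_bound' ?_ (C := Real.exp (L * c)) ?_
    · exact Real.continuous_exp.comp_aestronglyMeasurable (hXm.const_mul L)
    · filter_upwards [hbdd] with ω hω
      rw [abs_of_pos (Real.exp_pos _)]
      exact Real.exp_le_exp.mpr (mul_le_mul_of_nonneg_left (le_trans (le_abs_self _) hω) hL)
  have hg_int : Integrable (fun ω => 1 + L * X ω + K * X ω ^ 2) μ := by
    exact (((hX_int.const_mul L).add (integrable_const 1)).add (hX2_int.const_mul K)).congr
      (by filter_upwards with ω; simp only [Pi.add_apply]; ring)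
  -- pointwise bound
  have hpt : (fun ω => Real.exp (L * X ω)) ≤ᵐ[μ] fun ω => 1 + L * X ω + K * X ω ^ 2 := by
    filter_upwards [hbdd] with ω hω
    have habs : |L * X ω| ≤ A := by
      rw [abs_mul, abs_of_nonneg hL]
      exact le_trans (mul_le_mul_of_nonneg_left hω hL) hA
    have := exp_le_quad habs hA3
    calc Real.exp (L * X ω) ≤ 1 + L * X ω + (L * X ω) ^ 2 / (2 * (1 - A / 3)) := this
    _ = 1 + L * X ω + K * X ω ^ 2 := by rw [hK]; ring
  -- condexp of the quadratic
  set q : Ω → ℝ := fun ω => X ω ^ 2 with hq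
  have hEq : (fun ω => 1 + L * X ω + K * X ω ^ 2)
      = (L • X + (fun _ => (1:ℝ))) + K • q := by
    funext ω
    simp only [Pi.add_apply, Pi.smul_apply, smul_eq_mul, hq]
    ring
  have h1 : μ[fun ω => 1 + L * X ω + K * X ω ^ 2|m] ≤ᵐ[μ] fun _ => 1 + K * s := by
    rw [hEq]
    have ea := condExp_add ((hX_int.smul L).add (integrable_const (1:ℝ))) (hX2_int.smul K)
      (m := m)
    have eb := condExp_add (hX_int.smul L) (integrable_const (1:ℝ)) (m := m)
    have ec := condExp_smul (m := m) (μ := μ) L X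
    have ed := condExp_smul (m := m) (μ := μ) K q
    have hconst := condExp_const hm (1:ℝ) (μ := μ)
    filter_upwards [ea, eb, ec, ed, hmean, hvar] with ω e1 e2 e3 e4 e5 e6
    simp only [Pi.add_apply] at e1 e2
    simp only [Pi.smul_apply, smul_eq_mul] at e3 e4
    simp only [Pi.zero_apply] at e5
    rw [e1, e2, e3, e4, e5, hconst, mul_zero]
    simp only [Pi.one_apply]
    have : K * (μ[q|m]) ω ≤ K * s := mul_le_mul_of_nonneg_left e6 hK0
    linarith
  have hmono := condExp_mono hexp_int hg_int hpt (m := m)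
  filter_upwards [hmono, h1] with ω hω1 hω2
  calc (μ[fun ω => Real.exp (L * X ω)|m]) ω ≤ 1 + K * s := le_trans hω1 hω2
  _ ≤ Real.exp (K * s) := by linarith [Real.add_one_le_exp (K * s)]



/-- Freedman's inequality: for a martingale `Z` with increments bounded by `c i` and
conditional variances bounded by `σ i ^ 2`, and `M` an upper bound on the `c i`,
`P(Z_n − Z_0 ≥ t) ≤ exp(−t²/(2Σσᵢ² + 2Mt/3))`. -/
theorem freedman_inequality
    {Ω : Type*} {m0 : MeasurableSpace Ω} {μ : Measure Ω} [IsProbabilityMeasure μ]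
    (ℱ : Filtration ℕ m0) (Z : ℕ → Ω → ℝ) (n : ℕ) (hn : 1 ≤ n)
    (c σ : ℕ → ℝ) (M : ℝ)
    (hmart : Martingale Z ℱ μ)
    (hc : ∀ i, 1 ≤ i → i ≤ n → 0 < c i)
    (hbdd : ∀ i, 1 ≤ i → i ≤ n → ∀ᵐ ω ∂μ, |Z i ω - Z (i - 1) ω| ≤ c i)
    (hvar : ∀ i, 1 ≤ i → i ≤ n →
      ∀ᵐ ω ∂μ, (μ[fun ω' => (Z i ω' - Z (i - 1) ω') ^ 2|ℱ (i - 1)]) ω ≤ (σ i) ^ 2)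
    (hM : ∀ i, 1 ≤ i → i ≤ n → c i ≤ M) :
    ∀ t : ℝ, 0 ≤ t →
      (μ {ω | t ≤ Z n ω - Z 0 ω}).toReal ≤
        Real.exp (-(t ^ 2) /
          (2 * ∑ i ∈ Finset.Icc 1 n, (σ i) ^ 2 + 2 * M * t / 3)) := by
  have hM0 : 0 < M := lt_of_lt_of_le (hc 1 le_rfl hn) (hM 1 le_rfl hn)
  -- a.e. bound on |Z k - Z 0|
  have hdiff : ∀ k, k ≤ n → ∀ᵐ ω ∂μ, |Z k ω - Z 0 ω| ≤ ∑ i ∈ Icc 1 k, c i := by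
    intro k
    induction k with
    | zero => intro _; filter_upwards with ω; simp
    | succ j ih =>
      intro hjn
      have hb := hbdd (j + 1) (Nat.le_add_left 1 j) hjn
      simp only [Nat.add_sub_cancel] at hb
      filter_upwards [ih (Nat.le_of_succ_le hjn), hb] with ω h1 h2
      rw [Finset.sum_Icc_succ_top (Nat.le_add_left 1 j)]
      calc |Z (j+1) ω - Z 0 ω| ≤ |Z (j+1) ω - Z j ω| + |Z j ω - Z 0 ω| := by
            have : Z (j+1) ω - Z 0 ω = (Z (j+1) ω - Z j ω) + (Z j ω - Z 0 ω) := by ring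
            rw [this]; exact abs_add_le _ _
      _ ≤ (∑ i ∈ Icc 1 j, c i) + c (j+1) := by linarith
  -- measurability and integrability of the exponential
  have hZm : ∀ k : ℕ, AEStronglyMeasurable (Z k) μ := fun k =>
    ((hmart.stronglyAdapted k).mono (ℱ.le k)).aestronglyMeasurable
  have hint : ∀ (L : ℝ), 0 ≤ L → ∀ k, k ≤ n →
      Integrable (fun ω => Real.exp (L * (Z k ω - Z 0 ω))) μ := by
    intro L hL k hk
    refine integrable_of_ae_bound' ?_ (C := Real.exp (L * ∑ i ∈ Icc 1 k, c i)) ?_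
    · exact Real.continuous_exp.comp_aestronglyMeasurable
        (((hZm k).sub (hZm 0)).const_mul L)
    · filter_upwards [hdiff k hk] with ω hω
      rw [abs_of_pos (Real.exp_pos _)]
      exact Real.exp_le_exp.mpr
        (mul_le_mul_of_nonneg_left (le_trans (le_abs_self _) hω) hL)
  -- key MGF bound
  have key : ∀ (L : ℝ), 0 ≤ L → L * M < 3 → ∀ k, k ≤ n →
      ∫ ω, Real.exp (L * (Z k ω - Z 0 ω)) ∂μ ≤
        Real.exp (L ^ 2 / (2 * (1 - L * M / 3)) * ∑ i ∈ Icc 1 k, σ i ^ 2) := by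
    intro L hL hLM k
    induction k with
    | zero =>
      intro _
      simp only [sub_self, mul_zero, Real.exp_zero, integral_const, measure_univ,
        ENNReal.toReal_one, smul_eq_mul, mul_one]
      rw [show Icc 1 0 = (∅ : Finset ℕ) from Finset.Icc_eq_empty (by omega)]
      simp [Real.exp_nonneg]
    | succ j ih =>
      intro hjn
      have hjn' : j ≤ n := Nat.le_of_succ_le hjn
      have h1j : 1 ≤ j + 1 := Nat.le_add_left 1 j
      set K : ℝ := L ^ 2 / (2 * (1 - L * M / 3)) with hKdef
      set f : Ω → ℝ := fun ω => Real.exp (L * (Z j ω - Z 0 ω)) with hfdef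
      set g : Ω → ℝ := fun ω => Real.exp (L * (Z (j+1) ω - Z j ω)) with hgdef
      set D : ℝ := Real.exp (K * σ (j+1) ^ 2) with hDdef
      -- conditional mean zero
      have hmean : μ[fun ω => Z (j+1) ω - Z j ω|ℱ j] =ᵐ[μ] 0 := by
        have hsub := condExp_sub (hmart.integrable (j+1)) (hmart.integrable j) (m := ℱ j)
        have h1 := hmart.condExp_ae_eq (Nat.le_succ j)
        have h2 : μ[Z j|ℱ j] = Z j :=
          condExp_of_stronglyMeasurable (ℱ.le j) (hmart.stronglyAdapted j) (hmart.integrable j)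
        have : (fun ω => Z (j+1) ω - Z j ω) = Z (j+1) - Z j := rfl
        rw [this]
        filter_upwards [hsub, h1] with ω e1 e2
        simp only [Pi.sub_apply] at e1 e2 ⊢
        rw [e1, e2, h2]
        simp
      -- conditional variance bound
      have hvar' : ∀ᵐ ω ∂μ,
          (μ[fun ω' => (Z (j+1) ω' - Z j ω') ^ 2|ℱ j]) ω ≤ σ (j+1) ^ 2 := by
        have := hvar (j+1) h1j hjn
        simpa only [Nat.add_sub_cancel] using this
      have hbdd' : ∀ᵐ ω ∂μ, |Z (j+1) ω - Z j ω| ≤ c (j+1) := by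
        have := hbdd (j+1) h1j hjn
        simpa only [Nat.add_sub_cancel] using this
      -- conditional MGF bound
      have hB := condexp_exp_le (ℱ.le j) ((hZm (j+1)).sub (hZm j))
        (c := c (j+1)) (s := σ (j+1) ^ 2) (A := L * M) (L := L) hL
        (mul_le_mul_of_nonneg_left (hM (j+1) h1j hjn) hL) hLM hbdd' hmean hvar'
      -- measurability of f w.r.t. ℱ j
      have hf_meas : StronglyMeasurable[ℱ j] f := by
        have hj : StronglyMeasurable[ℱ j] (Z j) := hmart.stronglyAdapted j
        have h0 : StronglyMeasurable[ℱ j] (Z 0) := (hmart.stronglyAdapted 0).mono (ℱ.mono (Nat.zero_le j))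
        exact Real.continuous_exp.comp_stronglyMeasurable ((hj.sub h0).const_mul L)
      have hprod : (fun ω => Real.exp (L * (Z (j+1) ω - Z 0 ω))) = f * g := by
        funext ω
        simp only [Pi.mul_apply, hfdef, hgdef, ← Real.exp_add]
        congr 1; ring
      have hfg_int : Integrable (f * g) μ := hprod ▸ hint L hL (j+1) hjn
      have hg_int : Integrable g μ := by
        refine integrable_of_ae_bound' ?_ (C := Real.exp (L * c (j+1))) ?_
        · exact Real.continuous_exp.comp_aestronglyMeasurable
            (((hZm (j+1)).sub (hZm j)).const_mul L)
        · filter_upwards [hbdd'] with ω hω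
          rw [abs_of_pos (Real.exp_pos _)]
          exact Real.exp_le_exp.mpr
            (mul_le_mul_of_nonneg_left (le_trans (le_abs_self _) hω) hL)
      have hf_int : Integrable f μ := hint L hL j hjn'
      have hmul := condExp_mul_of_stronglyMeasurable_left hf_meas hfg_int hg_int
      calc ∫ ω, Real.exp (L * (Z (j+1) ω - Z 0 ω)) ∂μ
          = ∫ ω, (f * g) ω ∂μ := by rw [hprod]
      _ = ∫ ω, (μ[f * g|ℱ j]) ω ∂μ := (integral_condExp (ℱ.le j)).symm
      _ ≤ ∫ ω, f ω * D ∂μ := by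
          refine integral_mono_ae (integrable_condExp) (hf_int.mul_const D) ?_
          filter_upwards [hmul, hB] with ω e1 e2
          rw [e1]
          simp only [Pi.mul_apply]
          exact mul_le_mul_of_nonneg_left e2 (Real.exp_pos _).le
      _ = (∫ ω, f ω ∂μ) * D := integral_mul_const D f
      _ ≤ Real.exp (K * ∑ i ∈ Icc 1 j, σ i ^ 2) * D :=
          mul_le_mul_of_nonneg_right (ih hjn') (Real.exp_pos _).le
      _ = Real.exp (K * ∑ i ∈ Icc 1 (j+1), σ i ^ 2) := by
          rw [hDdef, ← Real.exp_add, Finset.sum_Icc_succ_top h1j]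
          congr 1; ring
  -- Chernoff argument
  intro t ht
  set v : ℝ := ∑ i ∈ Icc 1 n, σ i ^ 2 with hvdef
  have hv0 : 0 ≤ v := Finset.sum_nonneg fun i _ => sq_nonneg _
  rcases eq_or_lt_of_le ht with h0 | htpos
  · -- t = 0
    have : -(t ^ 2) / (2 * v + 2 * M * t / 3) = 0 := by rw [← h0]; simp
    rw [this, Real.exp_zero]
    exact ENNReal.toReal_mono ENNReal.one_ne_top prob_le_one
  · -- t > 0
    have main : ∀ (L : ℝ), 0 ≤ L → L * M < 3 →
        (μ {ω | t ≤ Z n ω - Z 0 ω}).toReal ≤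
          Real.exp (-L * t + L ^ 2 / (2 * (1 - L * M / 3)) * v) := by
      intro L hL hLM
      have hcher := ProbabilityTheory.measure_ge_le_exp_mul_mgf
        (X := fun ω => Z n ω - Z 0 ω) (μ := μ) (t := L) t hL (hint L hL n le_rfl)
      refine le_trans hcher ?_
      rw [Real.exp_add]
      refine mul_le_mul_of_nonneg_left ?_ (Real.exp_pos _).le
      exact key L hL hLM n le_rfl
    rcases eq_or_lt_of_le hv0 with hv | hv
    · -- v = 0
      have hL : (0:ℝ) ≤ 3 / (2 * M) := by positivity
      have hLM : 3 / (2 * M) * M < 3 := by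
        have hMne : M ≠ 0 := ne_of_gt hM0
        have : 3 / (2 * M) * M = 3 / 2 := by field_simp
        rw [this]; linarith
      refine le_trans (main _ hL hLM) (Real.exp_le_exp.mpr ?_)
      rw [← hv]
      have : -(3 / (2 * M)) * t + (3 / (2 * M)) ^ 2 / (2 * (1 - 3 / (2 * M) * M / 3)) * 0
          = -(t ^ 2) / (2 * 0 + 2 * M * t / 3) := by
        field_simp
        ring
      linarith [this.le, this.ge]
    · -- v > 0
      set d : ℝ := v + M * t / 3 with hddef
      have hd0 : 0 < d := by positivity
      set L : ℝ := t / d with hLdef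
      have hL : 0 ≤ L := by positivity
      have h13 : 1 - L * M / 3 = v / d := by
        rw [hLdef, hddef]
        field_simp
        ring
      have hLM : L * M < 3 := by
        have : L * M / 3 = 1 - v / d := by rw [← h13]; ring
        have hvd : 0 < v / d := by positivity
        nlinarith
      refine le_trans (main L hL hLM) (Real.exp_le_exp.mpr ?_)
      have hKv : L ^ 2 / (2 * (1 - L * M / 3)) * v = t ^ 2 / (2 * d) := by
        rw [h13, hLdef]
        field_simp
      have h2d : 2 * v + 2 * M * t / 3 = 2 * d := by rw [hddef]; ring
      rw [hKv, h2d, hLdef]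
      have : -(t / d) * t + t ^ 2 / (2 * d) = -(t ^ 2) / (2 * d) := by
        field_simp
        ring
      linarith [this.le]
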